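/- Let c > 0, D > 0, and let ν be a Borel measure on (0,∞) with Π(x) := ν((x,∞)). Suppose γ satisfies 0 < γ < c/D, ∫₀^∞ (e^{γ z} − 1) ν(dz) < ∞, and the Lundberg identity c γ − D γ² = ∫₀^∞ (e^{γ z} − 1) ν(dz). Define k_D(x) = (c/D) e^{−(c/D) x} and g(u) = (1/c) ∫₀^u k_D(u − x) Π(x) dx. Then ∫₀^∞ e^{γ z} g(z) dz = 1; that is, the exponentially tilted function e^{γ z} g(z) is a probability density on (0,∞). -/

import Mathlib

open MeasureTheory Set
open scoped ENNReal

/-- The tail of the Lévy measure `ν`: `Π(x) = ν((x,∞))`. -/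
noncomputable def nuTail (ν : Measure ℝ) (x : ℝ) : ℝ := (ν (Ioi x)).toReal

/-- The exponential density `k_D(x) = (c/D) e^{−(c/D)x}`. -/
noncomputable def kDens (c D x : ℝ) : ℝ := (c / D) * Real.exp (-(c / D) * x)

/-- The renewal kernel `g(u) = (1/c) ∫₀^u k_D(u−x) Π(x) dx`. -/
noncomputable def renKer (c D : ℝ) (ν : Measure ℝ) (u : ℝ) : ℝ :=
  (1 / c) * ∫ x in (0 : ℝ)..u, kDens c D (u - x) * nuTail ν x

lemma myExpIoi {b : ℝ} (hb : 0 < b) (a : ℝ) :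
    ∫ z in Ioi a, Real.exp (-(b * z)) = Real.exp (-(b * a)) / b := by
  have h := integral_comp_mul_left_Ioi (fun x => Real.exp (-x)) a hb
  simp only [smul_eq_mul] at h
  rw [h, integral_exp_neg_Ioi]
  field_simp

lemma myExpIoo {γ : ℝ} (hγ : 0 < γ) {z : ℝ} (hz : 0 ≤ z) :
    ∫ x in Ioo (0:ℝ) z, Real.exp (γ * x) = (Real.exp (γ * z) - 1) / γ := by
  rw [← integral_Ioc_eq_integral_Ioo, ← intervalIntegral.integral_of_le hz,
    intervalIntegral.integral_comp_mul_left Real.exp hγ.ne']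
  simp [Real.exp_zero, integral_exp]
  ring

/-- The exponentially tilted renewal kernel `e^{γz} g(z)` integrates to `1` when `γ`
is the adjustment coefficient, i.e. when the Lundberg identity holds. -/
theorem tilted_kernel_is_density
    (c D γ : ℝ) (hc : 0 < c) (hD : 0 < D)
    (ν : Measure ℝ) [SigmaFinite ν]
    (hγ0 : 0 < γ) (hγ : γ < c / D)
    (hint : IntegrableOn (fun z => Real.exp (γ * z) - 1) (Ioi (0 : ℝ)) ν)
    (hlund : c * γ - D * γ ^ 2 = ∫ z in Ioi (0 : ℝ), (Real.exp (γ * z) - 1) ∂ν) :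
    (∫ z in Ioi (0 : ℝ), Real.exp (γ * z) * renKer c D ν z) = 1 := by
  have hb : 0 < c / D := div_pos hc hD
  set b := c / D with hbdef
  have hbγ : 0 < b - γ := sub_pos.mpr hγ
  -- measurability of the tail
  have hmt : Measurable fun x : ℝ => ν (Ioi x) := by
    have : Antitone fun x : ℝ => ν (Ioi x) := fun x y hxy => measure_mono (Ioi_subset_Ioi hxy)
    exact this.measurable
  have hmPi : Measurable (nuTail ν) := hmt.ennreal_toReal
  have hPinn : ∀ x, 0 ≤ nuTail ν x := fun x => ENNReal.toReal_nonneg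
  have hmexp : Measurable fun x : ℝ => Real.exp (γ * x) :=
    Real.measurable_exp.comp (measurable_const.mul measurable_id)
  -- finiteness of the integral of e^{γz}-1
  have hfin0 : ∫⁻ z in Ioi (0:ℝ), ENNReal.ofReal (Real.exp (γ * z) - 1) ∂ν < ⊤ := by
    refine lt_of_le_of_lt (lintegral_mono fun z => ?_) hint.2
    exact Real.ofReal_le_enorm _
  -- tail finiteness
  have hfin : ∀ x : ℝ, 0 < x → ν (Ioi x) < ⊤ := by
    intro x hx
    have h1 : ENNReal.ofReal (Real.exp (γ * x) - 1) * ν (Ioi x)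
        ≤ ∫⁻ z in Ioi (0:ℝ), ENNReal.ofReal (Real.exp (γ * z) - 1) ∂ν := by
      rw [← setLIntegral_const]
      refine le_trans (setLIntegral_mono (g := fun z => ENNReal.ofReal (Real.exp (γ * z) - 1))
        (hmexp.sub measurable_const).ennreal_ofReal
        fun z hz => ENNReal.ofReal_le_ofReal (by
          have h3 := Real.exp_le_exp.mpr (mul_le_mul_of_nonneg_left (le_of_lt hz) hγ0.le)
          linarith)) ?_
      exact lintegral_mono_set (Ioi_subset_Ioi hx.le)
    have h2 : (0:ℝ≥0∞) < ENNReal.ofReal (Real.exp (γ * x) - 1) := by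
      rw [ENNReal.ofReal_pos]
      have : (1:ℝ) < Real.exp (γ * x) := by
        rw [← Real.exp_zero]
        exact Real.exp_lt_exp.mpr (mul_pos hγ0 hx)
      linarith
    by_contra hcon
    push_neg at hcon
    rw [top_le_iff.mp hcon, ENNReal.mul_top h2.ne', top_le_iff] at h1
    exact hfin0.ne h1
  have htail : ∀ x : ℝ, 0 < x → ENNReal.ofReal (nuTail ν x) = ν (Ioi x) := fun x hx =>
    ENNReal.ofReal_toReal (hfin x hx).ne
  have hexpIoo : ∀ z : ℝ, 0 ≤ z → ∫⁻ x in Ioo (0:ℝ) z, ENNReal.ofReal (Real.exp (γ * x))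
      = ENNReal.ofReal ((Real.exp (γ * z) - 1) / γ) := by
    intro z hz
    rw [← ofReal_integral_eq_lintegral_ofReal (f := fun x => Real.exp (γ * x))
      (((intervalIntegrable_iff_integrableOn_Ioo_of_le hz).mp
        (((continuous_const.mul continuous_id').rexp).intervalIntegrable 0 z)))
      (ae_of_all _ fun x => (Real.exp_pos _).le), myExpIoo hγ0 hz]
  -- Tonelli A
  have tonA : ∫⁻ x in Ioi (0:ℝ), ENNReal.ofReal (Real.exp (γ * x)) * ν (Ioi x)
      = ∫⁻ z in Ioi (0:ℝ), ENNReal.ofReal ((Real.exp (γ * z) - 1) / γ) ∂ν := by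
    have hmf : AEMeasurable (Function.uncurry fun (x z : ℝ) =>
        if x < z then ENNReal.ofReal (Real.exp (γ * x)) else 0)
        ((volume.restrict (Ioi (0:ℝ))).prod (ν.restrict (Ioi (0:ℝ)))) := by
      refine Measurable.aemeasurable ?_
      refine Measurable.ite (measurableSet_lt measurable_fst measurable_snd) ?_ measurable_const
      exact (hmexp.comp measurable_fst).ennreal_ofReal
    have hswap := lintegral_lintegral_swap hmf
    have hL : ∫⁻ x, ∫⁻ z, (if x < z then ENNReal.ofReal (Real.exp (γ * x)) else 0)
          ∂(ν.restrict (Ioi 0)) ∂(volume.restrict (Ioi 0))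
        = ∫⁻ x in Ioi (0:ℝ), ENNReal.ofReal (Real.exp (γ * x)) * ν (Ioi x) := by
      refine lintegral_congr_ae ?_
      filter_upwards [ae_restrict_mem measurableSet_Ioi] with x hx
      have hi : (fun z => if x < z then ENNReal.ofReal (Real.exp (γ * x)) else 0)
          = (Ioi x).indicator (fun _ => ENNReal.ofReal (Real.exp (γ * x))) := by
        ext z; simp [Set.indicator_apply, mem_Ioi]
      rw [hi, lintegral_indicator measurableSet_Ioi, setLIntegral_const,
        Measure.restrict_apply measurableSet_Ioi,
        inter_eq_left.mpr (Ioi_subset_Ioi hx.le)]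
    have hR : ∫⁻ z, ∫⁻ x, (if x < z then ENNReal.ofReal (Real.exp (γ * x)) else 0)
          ∂(volume.restrict (Ioi 0)) ∂(ν.restrict (Ioi 0))
        = ∫⁻ z in Ioi (0:ℝ), ENNReal.ofReal ((Real.exp (γ * z) - 1) / γ) ∂ν := by
      refine lintegral_congr_ae ?_
      filter_upwards [ae_restrict_mem measurableSet_Ioi] with z hz
      have hi : (fun x => if x < z then ENNReal.ofReal (Real.exp (γ * x)) else 0)
          = (Iio z).indicator (fun x => ENNReal.ofReal (Real.exp (γ * x))) := by
        ext x; simp [Set.indicator_apply, mem_Iio]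
      rw [hi, lintegral_indicator measurableSet_Iio,
        Measure.restrict_restrict measurableSet_Iio, Iio_inter_Ioi,
        hexpIoo z (le_of_lt hz)]
    rw [← hL, hswap, hR]
  -- finiteness of J = ∫ e^{γx} tail
  have hJfin : ∫⁻ x in Ioi (0:ℝ), ENNReal.ofReal (Real.exp (γ * x)) * ν (Ioi x) < ⊤ := by
    rw [tonA]
    have hrw : ∀ z : ℝ, ENNReal.ofReal ((Real.exp (γ * z) - 1) / γ)
        = ENNReal.ofReal γ⁻¹ * ENNReal.ofReal (Real.exp (γ * z) - 1) := by
      intro z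
      rw [div_eq_mul_inv, mul_comm, ENNReal.ofReal_mul (inv_nonneg.mpr hγ0.le)]
    simp_rw [hrw]
    rw [lintegral_const_mul' _ _ ENNReal.ofReal_ne_top]
    exact ENNReal.mul_lt_top ENNReal.ofReal_lt_top hfin0
  have haeq : ∀ᵐ x ∂(volume.restrict (Ioi (0:ℝ))),
      ENNReal.ofReal (Real.exp (γ * x) * nuTail ν x)
        = ENNReal.ofReal (Real.exp (γ * x)) * ν (Ioi x) := by
    filter_upwards [ae_restrict_mem measurableSet_Ioi] with x hx
    rw [ENNReal.ofReal_mul (Real.exp_pos _).le, htail x hx]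
  have hJint : IntegrableOn (fun x => Real.exp (γ * x) * nuTail ν x) (Ioi (0:ℝ)) := by
    refine ⟨((hmexp.mul hmPi).aestronglyMeasurable).restrict, ?_⟩
    rw [hasFiniteIntegral_iff_norm]
    have heq : ∫⁻ x, ENNReal.ofReal ‖Real.exp (γ * x) * nuTail ν x‖
          ∂(volume.restrict (Ioi (0:ℝ)))
        = ∫⁻ x in Ioi (0:ℝ), ENNReal.ofReal (Real.exp (γ * x)) * ν (Ioi x) := by
      refine lintegral_congr_ae ?_
      filter_upwards [haeq] with x hx
      rw [← hx, Real.norm_eq_abs, abs_of_nonneg (mul_nonneg (Real.exp_pos _).le (hPinn x))]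
    rw [heq]; exact hJfin
  have hPiint : ∀ z : ℝ, IntegrableOn (nuTail ν) (Ioc (0:ℝ) z) := by
    intro z
    refine Integrable.mono (hJint.mono_set Ioc_subset_Ioi_self)
      (hmPi.aestronglyMeasurable.restrict) ?_
    filter_upwards [ae_restrict_mem measurableSet_Ioc] with x hx
    rw [Real.norm_eq_abs, Real.norm_eq_abs, abs_of_nonneg (hPinn x),
      abs_of_nonneg (mul_nonneg (Real.exp_pos _).le (hPinn x))]
    exact le_mul_of_one_le_left (hPinn x) (Real.one_le_exp (mul_nonneg hγ0.le hx.1.le))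
  have hkm : Measurable fun t : ℝ => kDens c D t := by
    show Measurable fun t : ℝ => (c / D) * Real.exp (-(c / D) * t)
    exact (continuous_const.mul ((continuous_const.mul continuous_id).rexp)).measurable
  have hknn : ∀ t : ℝ, 0 ≤ kDens c D t := by
    intro t
    show (0:ℝ) ≤ (c / D) * Real.exp (-(c / D) * t)
    positivity
  have hkle : ∀ t : ℝ, 0 ≤ t → kDens c D t ≤ b := by
    intro t ht
    show (c / D) * Real.exp (-(c / D) * t) ≤ b
    rw [← hbdef]
    calc b * Real.exp (-b * t) ≤ b * 1 := by
          refine mul_le_mul_of_nonneg_left ?_ hb.le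
          rw [← Real.exp_zero]
          exact Real.exp_le_exp.mpr (by nlinarith)
      _ = b := mul_one b
  have hprodint : ∀ z : ℝ, 0 < z → IntegrableOn
      (fun x => Real.exp (γ * z) * (kDens c D (z - x) * nuTail ν x)) (Ioc (0:ℝ) z) := by
    intro z hz
    refine Integrable.mono (((hPiint z).const_mul (Real.exp (γ * z) * b)))
      ((measurable_const.mul ((hkm.comp (measurable_const.sub measurable_id)).mul
        hmPi)).aestronglyMeasurable.restrict) ?_
    filter_upwards [ae_restrict_mem measurableSet_Ioc] with x hx
    have h1 : 0 ≤ kDens c D (z - x) := hknn _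
    have h2 : kDens c D (z - x) ≤ b := hkle _ (by linarith [hx.2])
    rw [Real.norm_eq_abs, Real.norm_eq_abs,
      abs_of_nonneg (mul_nonneg (Real.exp_pos _).le (mul_nonneg h1 (hPinn x))),
      abs_of_nonneg (mul_nonneg (mul_nonneg (Real.exp_pos _).le hb.le) (hPinn x))]
    have := mul_le_mul_of_nonneg_right h2 (hPinn x)
    nlinarith [Real.exp_pos (γ * z)]
  -- inner z-integral for Tonelli B
  have hGinner : ∀ x : ℝ, 0 < x →
      ∫⁻ z in Ioi x, ENNReal.ofReal (Real.exp (γ * z) * (kDens c D (z - x) * nuTail ν x))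
        = ENNReal.ofReal (b / (b - γ)) * ENNReal.ofReal (Real.exp (γ * x) * nuTail ν x) := by
    intro x hx
    have hfe : ∀ z : ℝ, Real.exp (γ * z) * (kDens c D (z - x) * nuTail ν x)
        = (nuTail ν x * b * Real.exp (b * x)) * Real.exp (-((b - γ) * z)) := by
      intro z
      have e1 : Real.exp (γ * z) * Real.exp (-(c / D) * (z - x))
          = Real.exp (b * x) * Real.exp (-((b - γ) * z)) := by
        rw [← Real.exp_add, ← Real.exp_add, ← hbdef]
        congr 1; ring
      show Real.exp (γ * z) * ((c / D) * Real.exp (-(c / D) * (z - x)) * nuTail ν x) = _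
      calc Real.exp (γ * z) * ((c / D) * Real.exp (-(c / D) * (z - x)) * nuTail ν x)
          = (Real.exp (γ * z) * Real.exp (-(c / D) * (z - x))) * ((c / D) * nuTail ν x) := by
            ring
        _ = (Real.exp (b * x) * Real.exp (-((b - γ) * z))) * (b * nuTail ν x) := by
            rw [e1, ← hbdef]
        _ = (nuTail ν x * b * Real.exp (b * x)) * Real.exp (-((b - γ) * z)) := by ring
    simp_rw [hfe]
    have hIntExp : IntegrableOn (fun z : ℝ => Real.exp (-((b - γ) * z))) (Ioi x) := by
      have h := exp_neg_integrableOn_Ioi x hbγ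
      have he : (fun z : ℝ => Real.exp (-(b - γ) * z)) = fun z : ℝ => Real.exp (-((b - γ) * z)) := by
        funext z; congr 1; ring
      rwa [he] at h
    rw [← ofReal_integral_eq_lintegral_ofReal (hIntExp.const_mul _)
      (ae_of_all _ fun z => mul_nonneg (mul_nonneg (mul_nonneg (hPinn x) hb.le)
        (Real.exp_pos _).le) (Real.exp_pos _).le)]
    rw [MeasureTheory.integral_const_mul, myExpIoi hbγ x]
    rw [← ENNReal.ofReal_mul (by positivity)]
    congr 1
    have e2 : Real.exp (b * x) * Real.exp (-((b - γ) * x)) = Real.exp (γ * x) := by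
      rw [← Real.exp_add]; congr 1; ring
    calc (nuTail ν x * b * Real.exp (b * x)) * (Real.exp (-((b - γ) * x)) / (b - γ))
        = (nuTail ν x * b / (b - γ)) * (Real.exp (b * x) * Real.exp (-((b - γ) * x))) := by
          ring
      _ = b / (b - γ) * (Real.exp (γ * x) * nuTail ν x) := by rw [e2]; ring
  -- Tonelli B
  have tonB : ∫⁻ z in Ioi (0:ℝ), ∫⁻ x in Ioc (0:ℝ) z,
        ENNReal.ofReal (Real.exp (γ * z) * (kDens c D (z - x) * nuTail ν x))
      = ENNReal.ofReal (b / (b - γ))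
        * ∫⁻ x in Ioi (0:ℝ), ENNReal.ofReal (Real.exp (γ * x) * nuTail ν x) := by
    have hmF : Measurable (Function.uncurry fun (z x : ℝ) =>
        if x < z then ENNReal.ofReal (Real.exp (γ * z) * (kDens c D (z - x) * nuTail ν x))
        else 0) := by
      refine Measurable.ite (measurableSet_lt measurable_snd measurable_fst) ?_ measurable_const
      refine Measurable.ennreal_ofReal ?_
      exact (hmexp.comp measurable_fst).mul
        ((hkm.comp (measurable_fst.sub measurable_snd)).mul (hmPi.comp measurable_snd))
    have hswap := lintegral_lintegral_swap (μ := volume.restrict (Ioi (0:ℝ)))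
        (ν := volume.restrict (Ioi (0:ℝ))) hmF.aemeasurable
    have hL : ∫⁻ z, (∫⁻ x, (if x < z then
            ENNReal.ofReal (Real.exp (γ * z) * (kDens c D (z - x) * nuTail ν x)) else 0)
          ∂(volume.restrict (Ioi 0))) ∂(volume.restrict (Ioi 0))
        = ∫⁻ z in Ioi (0:ℝ), ∫⁻ x in Ioc (0:ℝ) z,
            ENNReal.ofReal (Real.exp (γ * z) * (kDens c D (z - x) * nuTail ν x)) := by
      refine lintegral_congr_ae ?_
      filter_upwards [ae_restrict_mem measurableSet_Ioi] with z hz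
      have hi : (fun x => if x < z then
            ENNReal.ofReal (Real.exp (γ * z) * (kDens c D (z - x) * nuTail ν x)) else 0)
          = (Iio z).indicator (fun x =>
            ENNReal.ofReal (Real.exp (γ * z) * (kDens c D (z - x) * nuTail ν x))) := by
        ext t; simp [Set.indicator_apply, mem_Iio]
      rw [hi, lintegral_indicator measurableSet_Iio,
        Measure.restrict_restrict measurableSet_Iio, Iio_inter_Ioi,
        restrict_Ioo_eq_restrict_Ioc]
    have hR : ∫⁻ x, (∫⁻ z, (if x < z then
            ENNReal.ofReal (Real.exp (γ * z) * (kDens c D (z - x) * nuTail ν x)) else 0)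
          ∂(volume.restrict (Ioi 0))) ∂(volume.restrict (Ioi 0))
        = ∫⁻ x in Ioi (0:ℝ), ENNReal.ofReal (b / (b - γ))
            * ENNReal.ofReal (Real.exp (γ * x) * nuTail ν x) := by
      refine lintegral_congr_ae ?_
      filter_upwards [ae_restrict_mem measurableSet_Ioi] with x hx
      have hi : (fun z => if x < z then
            ENNReal.ofReal (Real.exp (γ * z) * (kDens c D (z - x) * nuTail ν x)) else 0)
          = (Ioi x).indicator (fun z =>
            ENNReal.ofReal (Real.exp (γ * z) * (kDens c D (z - x) * nuTail ν x))) := by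
        ext t; simp [Set.indicator_apply, mem_Ioi]
      rw [hi, lintegral_indicator measurableSet_Ioi,
        Measure.restrict_restrict measurableSet_Ioi,
        inter_eq_left.mpr (Ioi_subset_Ioi hx.le), hGinner x hx]
    rw [← hL, hswap, hR, lintegral_const_mul' _ _ ENNReal.ofReal_ne_top]
  -- representation of the tilted kernel as a lintegral
  have hren : ∀ z : ℝ, 0 < z → ENNReal.ofReal (Real.exp (γ * z) * renKer c D ν z)
      = ENNReal.ofReal (1 / c) * ∫⁻ x in Ioc (0:ℝ) z,
          ENNReal.ofReal (Real.exp (γ * z) * (kDens c D (z - x) * nuTail ν x)) := by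
    intro z hz
    rw [← ofReal_integral_eq_lintegral_ofReal (hprodint z hz)
      (ae_of_all _ fun x => mul_nonneg (Real.exp_pos _).le
        (mul_nonneg (hknn _) (hPinn x)))]
    rw [← ENNReal.ofReal_mul (by positivity : (0:ℝ) ≤ 1 / c)]
    congr 1
    rw [renKer, intervalIntegral.integral_of_le hz.le, MeasureTheory.integral_const_mul]
    ring
  -- nonnegativity of the kernel
  have hrennn : ∀ z : ℝ, 0 < z → 0 ≤ renKer c D ν z := by
    intro z hz
    rw [renKer]
    have h1 : 0 ≤ ∫ x in (0:ℝ)..z, kDens c D (z - x) * nuTail ν x := by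
      apply intervalIntegral.integral_nonneg hz.le
      intro x _
      exact mul_nonneg (hknn _) (hPinn x)
    positivity
  -- measurability of the tilted kernel
  have hmG : AEStronglyMeasurable (fun z => Real.exp (γ * z) * renKer c D ν z)
      (volume.restrict (Ioi (0:ℝ))) := by
    have hmF2 : StronglyMeasurable (Function.uncurry fun (z x : ℝ) =>
        (Ioc (0:ℝ) z).indicator (fun x => kDens c D (z - x) * nuTail ν x) x) := by
      refine Measurable.stronglyMeasurable ?_
      have heq : (Function.uncurry fun (z x : ℝ) =>
          (Ioc (0:ℝ) z).indicator (fun x => kDens c D (z - x) * nuTail ν x) x)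
          = fun p : ℝ × ℝ => if 0 < p.2 ∧ p.2 ≤ p.1 then
              kDens c D (p.1 - p.2) * nuTail ν p.2 else 0 := by
        funext p
        simp [Function.uncurry, Set.indicator_apply, mem_Ioc]
      rw [heq]
      refine Measurable.ite ?_ ?_ measurable_const
      · exact (measurableSet_lt measurable_const measurable_snd).inter
          (measurableSet_le measurable_snd measurable_fst)
      · exact (hkm.comp (measurable_fst.sub measurable_snd)).mul (hmPi.comp measurable_snd)
    have hmInt := MeasureTheory.StronglyMeasurable.integral_prod_right (ν := (volume : Measure ℝ)) hmF2
    have hmTot : StronglyMeasurable fun z : ℝ => Real.exp (γ * z)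
        * ((1 / c) * ∫ x, (Ioc (0:ℝ) z).indicator
            (fun x => kDens c D (z - x) * nuTail ν x) x) :=
      (hmexp.stronglyMeasurable).mul (stronglyMeasurable_const.mul hmInt)
    refine hmTot.aestronglyMeasurable.restrict.congr ?_
    filter_upwards [ae_restrict_mem measurableSet_Ioi] with z hz
    rw [renKer, intervalIntegral.integral_of_le (le_of_lt hz),
      ← integral_indicator measurableSet_Ioc]
  -- the key lintegral computation
  have key : ∫⁻ z in Ioi (0:ℝ), ENNReal.ofReal (Real.exp (γ * z) * renKer c D ν z)
      = ENNReal.ofReal 1 := by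
    have h1 : ∫⁻ z in Ioi (0:ℝ), ENNReal.ofReal (Real.exp (γ * z) * renKer c D ν z)
        = ∫⁻ z in Ioi (0:ℝ), ENNReal.ofReal (1 / c) * ∫⁻ x in Ioc (0:ℝ) z,
            ENNReal.ofReal (Real.exp (γ * z) * (kDens c D (z - x) * nuTail ν x)) := by
      refine lintegral_congr_ae ?_
      filter_upwards [ae_restrict_mem measurableSet_Ioi] with z hz
      exact hren z hz
    rw [h1, lintegral_const_mul' _ _ ENNReal.ofReal_ne_top, tonB,
      lintegral_congr_ae haeq, tonA]
    have h2 : ∫⁻ z in Ioi (0:ℝ), ENNReal.ofReal ((Real.exp (γ * z) - 1) / γ) ∂ν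
        = ENNReal.ofReal ((c * γ - D * γ ^ 2) / γ) := by
      rw [← ofReal_integral_eq_lintegral_ofReal (hint.div_const γ) ?_]
      · rw [integral_div, ← hlund]
      · filter_upwards [ae_restrict_mem measurableSet_Ioi] with z hz
        have h3 : (1:ℝ) ≤ Real.exp (γ * z) := Real.one_le_exp (mul_nonneg hγ0.le (le_of_lt hz))
        exact div_nonneg (by linarith) hγ0.le
    rw [h2, ← ENNReal.ofReal_mul (by positivity : (0:ℝ) ≤ b / (b - γ)),
      ← ENNReal.ofReal_mul (by positivity : (0:ℝ) ≤ 1 / c)]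
    congr 1
    rw [hbdef]
    have hcγ : c * γ - D * γ ^ 2 = D * γ * (c / D - γ) := by field_simp
    rw [hcγ]
    have h6 : γ * D < c := (lt_div_iff₀ hD).mp (lt_of_lt_of_le hγ (le_of_eq hbdef))
    have h5 : D * γ < c := by linarith [mul_comm D γ]
    have hne : c - D * γ ≠ 0 := (sub_pos.mpr h5).ne'
    field_simp
  -- conclude
  rw [integral_eq_lintegral_of_nonneg_ae ?_ hmG]
  · rw [key, ENNReal.toReal_ofReal one_pos.le]
  · filter_upwards [ae_restrict_mem measurableSet_Ioi] with z hz
    exact mul_nonneg (Real.exp_pos _).le (hrennn z hz)
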